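/- arXiv:2012.13975 — 3 statements merged into one kernel-verified Lean document; each statement's English description precedes it below -/
import Mathlib

section
/- For every real η ≥ 1, define t(η) = (e/(e−1)) · η^η/(η+1)^{η+1}, ε₁(η) = (e−1)/e − (1 − (e/(e−1)) · η^η/(η+1)^{η+1})^η, and ε₂(η) = 1 − (η/(η+1))^η − exp(−(e/(e−1)) · (η/(η+1))^η). Then ε₁(η) ≤ ε₂(η). -/
open Real

lemma exp_quad_ub {x : ℝ} (h0 : 0 ≤ x) (h1 : x ≤ 1) : Real.exp x ≤ 1 + x + x ^ 2 := by
  have h := Real.exp_bound' h0 h1 (n := 2) (by norm_num)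
  simp [Finset.sum_range_succ, Nat.factorial] at h
  nlinarith [sq_nonneg x]

lemma log_trap_ub {y : ℝ} (hy : 1 ≤ y) : Real.log y ≤ (y - y⁻¹) / 2 := by
  have h0 : 0 ≤ Real.log y := Real.log_nonneg hy
  have h := Real.self_le_sinh_iff.mpr h0
  rwa [Real.sinh_eq, Real.exp_log (by linarith), Real.exp_neg, Real.exp_log (by linarith)] at h

lemma log_quad_lb {x : ℝ} (h0 : 0 ≤ x) (h1 : x ≤ 1) : x - x ^ 2 / 2 ≤ Real.log (1 + x) := by
  have hx1 : (0:ℝ) < 1 + x := by linarith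
  have hmono : Real.exp (x - x ^ 2 / 2) ≤ 1 + x := by
    have he1 : Real.exp x ≤ 1 + x + x ^ 2 / 2 + (2/9) * x ^ 3 := by
      have h := Real.exp_bound' h0 h1 (n := 3) (by norm_num)
      simp [Finset.sum_range_succ, Nat.factorial] at h
      nlinarith
    have he2 : 1 + x ^ 2 / 2 + x ^ 4 / 8 ≤ Real.exp (x ^ 2 / 2) := by
      have h := Real.quadratic_le_exp_of_nonneg (x := x ^ 2 / 2) (by positivity)
      nlinarith
    have hprod : Real.exp x ≤ (1 + x) * Real.exp (x ^ 2 / 2) := by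
      have hstep : 1 + x + x ^ 2 / 2 + (2/9) * x ^ 3 ≤ (1 + x) * (1 + x ^ 2 / 2 + x ^ 4 / 8) := by
        nlinarith [pow_nonneg h0 3, pow_nonneg h0 4, pow_nonneg h0 5]
      calc Real.exp x ≤ 1 + x + x ^ 2 / 2 + (2/9) * x ^ 3 := he1
        _ ≤ (1 + x) * (1 + x ^ 2 / 2 + x ^ 4 / 8) := hstep
        _ ≤ (1 + x) * Real.exp (x ^ 2 / 2) := by nlinarith [he2]
    have hsplit : Real.exp (x - x ^ 2 / 2) * Real.exp (x ^ 2 / 2) = Real.exp x := by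
      rw [← Real.exp_add]; ring_nf
    nlinarith [Real.exp_pos (x ^ 2 / 2), hsplit, hprod]
  exact (Real.le_log_iff_exp_le hx1).mpr hmono

lemma aux_sqrt_bound {s E : ℝ} (hs : s * s = E) (h0 : 0 < s)
    (hE : E < 2.7182818286) : s < 1.649 := by nlinarith

lemma aux_poly_cert {τ : ℝ} (h0 : 0 < τ) (h1 : τ ≤ 1/2) :
    (1 - (29/50) * (1 + τ/2)) * (1 + (21/50) * (1 + τ + τ^2)) ≤ 1 - τ := by
  have hsq : τ^2 ≤ 1/4 := by nlinarith [sq_nonneg (τ - 1/2)]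
  have hq : 0 ≤ (1/2 - τ) * (15229/20000 - (63/10000)*τ - (609/5000)*τ^2) := by
    apply mul_nonneg (by linarith)
    linarith
  nlinarith [hq]

set_option maxHeartbeats 1600000 in
/-- Theorem 4 (gap inequality, Eq. 22): with `t(η) = (e/(e-1)) η^η/(η+1)^{η+1}`,
the gap `ε₁` between MaxExp and HDP at `λ = t(η)` is at most the gap `ε₂`
at `λ = 1/(η+1)`. -/
theorem maxExp_HDP_gap_ineq (η : ℝ) (hη : 1 ≤ η) :
    (Real.exp 1 - 1) / Real.exp 1 -
        (1 - (Real.exp 1 / (Real.exp 1 - 1)) * η ^ η / (η + 1) ^ (η + 1)) ^ η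
      ≤ 1 - (η / (η + 1)) ^ η -
          Real.exp (-(Real.exp 1 / (Real.exp 1 - 1)) * (η / (η + 1)) ^ η) := by
  have hη0 : (0:ℝ) < η := by linarith
  have hm0 : (0:ℝ) < η + 1 := by linarith
  obtain ⟨E, hE⟩ : ∃ E : ℝ, E = Real.exp 1 := ⟨_, rfl⟩
  rw [← hE]
  have hE1 : (2.7182818283:ℝ) < E := hE ▸ Real.exp_one_gt_d9
  have hE2 : E < 2.7182818286 := hE ▸ Real.exp_one_lt_d9
  have hEm1 : (0:ℝ) < E - 1 := by linarith
  have hE0 : (0:ℝ) < E := by linarith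
  -- ρ and u
  obtain ⟨L, hLdef⟩ : ∃ L : ℝ, L = Real.log (1 + 1/η) := ⟨_, rfl⟩
  obtain ⟨ρ, hρdef⟩ : ∃ ρ : ℝ, ρ = 1 - η * L := ⟨_, rfl⟩
  have hyball : (1:ℝ) ≤ 1 + 1/η := by
    have : (0:ℝ) < 1/η := by positivity
    linarith
  have hu : (η / (η+1)) ^ η = Real.exp (ρ - 1) := by
    rw [Real.rpow_def_of_pos (by positivity)]
    congr 1
    have h1 : (1:ℝ) + 1/η = (η+1)/η := by field_simp
    have h2 : Real.log (η/(η+1)) = - L := by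
      rw [hLdef, h1, ← Real.log_inv]
      congr 1
      rw [inv_div]
    rw [h2, hρdef]; ring
  -- bounds on ρ
  obtain ⟨τ, hτdef⟩ : ∃ τ : ℝ, τ = 1/(η+1) := ⟨_, rfl⟩
  have hτ0 : (0:ℝ) < τ := by rw [hτdef]; positivity
  have hτh : τ ≤ 1/2 := by
    rw [hτdef, div_le_div_iff₀ hm0 (by norm_num)]; linarith
  have hinv : (1 + 1/η)⁻¹ = η/(η+1) := by
    rw [show (1:ℝ) + 1/η = (η+1)/η by field_simp, inv_div]
  have hρ_ub : ρ ≤ τ := by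
    have h := Real.one_sub_inv_le_log_of_pos (show (0:ℝ) < 1 + 1/η by linarith)
    rw [hinv, ← hLdef] at h
    have h2 : η * (1 - η/(η+1)) ≤ η * L := mul_le_mul_of_nonneg_left h (le_of_lt hη0)
    have h5 : η * (1 - η/(η+1)) = 1 - τ := by rw [hτdef]; field_simp; ring
    rw [hρdef]; linarith [h5 ▸ h2]
  have hρ_lb : τ/2 ≤ ρ := by
    have h := log_trap_ub hyball
    rw [hinv, ← hLdef] at h
    have h2 : η * L ≤ η * ((1 + 1/η - η/(η+1)) / 2) := mul_le_mul_of_nonneg_left h (le_of_lt hη0)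
    have h3 : η * ((1 + 1/η - η/(η+1)) / 2) = 1 - τ/2 := by
      rw [hτdef]; field_simp; ring
    rw [hρdef]; linarith [h3 ▸ h2]
  have hρ0 : 0 < ρ := lt_of_lt_of_le (by linarith) hρ_lb
  have hρh : ρ ≤ 1/2 := le_trans hρ_ub hτh
  -- w
  obtain ⟨P, hPdef⟩ : ∃ P : ℝ, P = Real.exp ρ := ⟨_, rfl⟩
  have hP0 : 0 < P := hPdef ▸ Real.exp_pos ρ
  obtain ⟨w, hwdef⟩ : ∃ w : ℝ, w = 1 - E/(E-1) * Real.exp (ρ - 1) := ⟨_, rfl⟩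
  have hwP : w = 1 - P / (E - 1) := by
    rw [hwdef, hPdef, Real.exp_sub, ← hE]
    field_simp
  have hPE : P < E - 1 := by
    have h1 : P ≤ Real.exp (1/2) := by
      rw [hPdef]; exact Real.exp_le_exp.mpr hρh
    have hsq : Real.exp (1/2) * Real.exp (1/2) = E := by
      rw [← Real.exp_add, hE]; norm_num
    have h2 : Real.exp (1/2) < 1.649 := aux_sqrt_bound hsq (Real.exp_pos _) hE2
    linarith
  have hw0 : 0 < w := by
    rw [hwP]
    have : P / (E-1) < 1 := (div_lt_one hEm1).mpr hPE
    linarith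
  have hw1 : w < 1 := by
    rw [hwP]
    have : 0 < P / (E-1) := by positivity
    linarith
  obtain ⟨D, hDdef⟩ : ∃ D : ℝ, D = w^2 / (2*η) := ⟨_, rfl⟩
  have hD2 : 2 * η * D = w^2 := by rw [hDdef]; field_simp
  have hD0 : 0 ≤ D := by rw [hDdef]; positivity
  -- numeric bounds on X = 1/(E-1)
  have hX1 : (29/50:ℝ) ≤ 1/(E-1) := by
    rw [le_div_iff₀ hEm1]; linarith
  have hX2 : (1:ℝ)/(E-1) ≤ 291/500 := by
    rw [div_le_iff₀ hEm1]; linarith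
  -- the polynomial endgame
  have hF : w * (w + P) ≤ 2 * η * ρ := by
    obtain ⟨X, hXdef⟩ : ∃ X : ℝ, X = 1/(E-1) := ⟨_, rfl⟩
    have hX1' : (29/50:ℝ) ≤ X := hXdef ▸ hX1
    have hX2' : X ≤ 291/500 := hXdef ▸ hX2
    have hX0 : 0 < X := by linarith
    have hwX : w = 1 - X * P := by rw [hwP, hXdef]; ring
    have hP_ub : P ≤ 1 + ρ + ρ^2 := by
      rw [hPdef]; exact exp_quad_ub (le_of_lt hρ0) (by linarith)
    have hP_lb : 1 + ρ ≤ P := by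
      rw [hPdef]; linarith [Real.add_one_le_exp ρ]
    have hA : w ≤ 1 - (29/50) * (1 + τ/2) := by
      have h1 : (29/50) * (1 + τ/2) ≤ X * P := by
        apply mul_le_mul hX1' (by linarith) (by linarith) (by linarith)
      rw [hwX]; linarith
    have hA0 : (0:ℝ) ≤ 1 - (29/50) * (1 + τ/2) := by linarith
    have hB : w + P ≤ 1 + (21/50) * (1 + τ + τ^2) := by
      have hsq : ρ^2 ≤ τ^2 := pow_le_pow_left₀ hρ0.le hρ_ub 2
      have hPτ : P ≤ 1 + τ + τ^2 := by linarith
      have h1 : (1 - X) * P ≤ (21/50) * (1 + τ + τ^2) := by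
        apply mul_le_mul (by linarith) hPτ hP0.le (by norm_num)
      have h2 : w + P = 1 + (1 - X) * P := by rw [hwX]; ring
      linarith
    have hB0 : (0:ℝ) ≤ w + P := by linarith
    have hmul : w * (w + P)
        ≤ (1 - (29/50) * (1 + τ/2)) * (1 + (21/50) * (1 + τ + τ^2)) :=
      mul_le_mul hA hB hB0 hA0
    have hpoly : (1 - (29/50) * (1 + τ/2)) * (1 + (21/50) * (1 + τ + τ^2)) ≤ 1 - τ :=
      aux_poly_cert hτ0 hτh
    have hlast : 1 - τ ≤ 2 * η * ρ := by
      have hval : η * τ = 1 - τ := by rw [hτdef]; field_simp; ring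
      have hρ2 := mul_le_mul_of_nonneg_left hρ_lb (le_of_lt hη0)
      have e1 : η * (τ/2) = (η * τ)/2 := by ring
      have e2 : 2 * η * ρ = 2 * (η * ρ) := by ring
      linarith
    linarith
  -- key exponential inequality
  have hww : w * w ≤ 2 * η * ρ := by
    have e : w * (w + P) = w * w + w * P := by ring
    linarith [hF, e, mul_pos hw0 hP0]
  have hρD : D ≤ ρ := by
    have e2 : (2*η) * D ≤ (2*η) * ρ := by
      have : 2 * η * D = w * w := by rw [hD2]; ring
      linarith [hww]
    exact le_of_mul_le_mul_left e2 (by linarith)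
  have key : Real.exp w - 1 ≤ P * Real.exp (w - D) - P := by
    have h1 : w * (ρ - D) ≤ (Real.exp w - 1) * (Real.exp (ρ - D) - 1) := by
      apply mul_le_mul
      · linarith [Real.add_one_le_exp w]
      · linarith [Real.add_one_le_exp (ρ - D)]
      · linarith
      · linarith [Real.add_one_le_exp w]
    have h2 : D * P ≤ w * (ρ - D) := by
      have hh := mul_le_mul_of_nonneg_left hF (le_of_lt hw0)
      have e1 : w * (w * (w + P)) = (2*η) * (D*w + D*P) := by
        have : w * (w * (w + P)) = w^2*w + w^2*P := by ring
        rw [this, ← hD2]; ring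
      have e3 : w * (2*η*ρ) = (2*η) * (w*ρ) := by ring
      have e2 : (2*η) * (D*w + D*P) ≤ (2*η) * (w*ρ) := by linarith [hh, e1, e3]
      have h6 := le_of_mul_le_mul_left e2 (by linarith : (0:ℝ) < 2*η)
      have e7 : w * (ρ - D) = w * ρ - D * w := by ring
      linarith
    have h3 : P - Real.exp (ρ - D) ≤ D * P := by
      have hsplit : Real.exp (ρ - D) = P * Real.exp (-D) := by
        rw [hPdef, ← Real.exp_add]; ring_nf
      have h5 : P * (1 - Real.exp (-D)) ≤ P * D :=
        mul_le_mul_of_nonneg_left (by linarith [Real.add_one_le_exp (-D)]) hP0.le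
      have e6 : P * (1 - Real.exp (-D)) = P - P * Real.exp (-D) := by ring
      rw [hsplit]; linarith [h5, e6]
    have h4 : Real.exp w * Real.exp (ρ - D) = P * Real.exp (w - D) := by
      rw [hPdef, ← Real.exp_add, ← Real.exp_add]; ring_nf
    have e8 : (Real.exp w - 1) * (Real.exp (ρ - D) - 1)
        = Real.exp w * Real.exp (ρ - D) - Real.exp w - Real.exp (ρ - D) + 1 := by ring
    linarith [h1, h2, h3, h4, e8]
  -- identity for the MaxExp term
  have hident : (1 - (E / (E - 1)) * η ^ η / (η + 1) ^ (η + 1)) ^ η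
      = ((η + w)/η) ^ η * Real.exp (ρ - 1) := by
    have hpow : ((η:ℝ)+1) ^ ((η:ℝ)+1) = (η+1) ^ η * (η+1) := by
      rw [Real.rpow_add hm0, Real.rpow_one]
    have hdiv : (η:ℝ) ^ η / (η+1) ^ η = (η/(η+1)) ^ η :=
      (Real.div_rpow (le_of_lt hη0) (le_of_lt hm0) η).symm
    have hne : ((η:ℝ)+1) ^ η ≠ 0 := ne_of_gt (Real.rpow_pos_of_pos hm0 η)
    have hbase : 1 - (E / (E - 1)) * η ^ η / (η + 1) ^ (η + 1) = (η + w)/(η+1) := by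
      rw [hpow]
      have hstep : (E / (E - 1)) * η ^ η / ((η+1) ^ η * (η+1))
          = (E / (E - 1)) * (η/(η+1)) ^ η / (η+1) := by
        rw [← hdiv]; field_simp
      rw [hstep, hu, hwdef]
      field_simp
      ring
    rw [hbase, show (η + w)/(η+1) = ((η + w)/η) * (η/(η+1)) by field_simp,
      Real.mul_rpow (by positivity) (by positivity), hu]
  -- lower bound for the rpow factor
  have hrpow_lb : Real.exp (w - D) ≤ ((η + w)/η) ^ η := by
    have hb : (η + w)/η = 1 + w/η := by field_simp
    have hlog : w/η - (w/η)^2/2 ≤ Real.log (1 + w/η) :=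
      log_quad_lb (by positivity) (by rw [div_le_one hη0]; linarith)
    have harg : w - D ≤ Real.log (1 + w/η) * η := by
      have hh := mul_le_mul_of_nonneg_left hlog (le_of_lt hη0)
      have hcalc : η * (w/η - (w/η)^2/2) = w - D := by
        rw [hDdef]; field_simp
      have e9 : η * Real.log (1 + w/η) = Real.log (1 + w/η) * η := by ring
      linarith [hh, hcalc, e9]
    rw [hb, Real.rpow_def_of_pos (by positivity)]
    exact Real.exp_le_exp.mpr harg
  -- final assembly
  have hexpterm : Real.exp (-(E / (E - 1)) * (η / (η + 1)) ^ η) = Real.exp (w - 1) := by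
    congr 1
    rw [hu, hwdef]; ring
  have hEfrac : (E - 1)/E = 1 - E⁻¹ := by field_simp
  have hkey2 : Real.exp (w - 1) - E⁻¹
      ≤ Real.exp (ρ - 1) * Real.exp (w - D) - Real.exp (ρ - 1) := by
    have e1 : Real.exp (ρ - 1) = P / E := by rw [Real.exp_sub, ← hPdef, ← hE]
    have e2 : Real.exp (w - 1) = Real.exp w / E := by rw [Real.exp_sub, ← hE]
    have h := mul_le_mul_of_nonneg_right key (le_of_lt (inv_pos.mpr hE0))
    rw [e1, e2]
    have expand : (Real.exp w - 1) * E⁻¹ = Real.exp w / E - E⁻¹ := by ring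
    have expand2 : (P * Real.exp (w - D) - P) * E⁻¹ = P / E * Real.exp (w - D) - P / E := by
      ring
    linarith [expand ▸ expand2 ▸ h]
  have hfactor : Real.exp (ρ - 1) * Real.exp (w - D)
      ≤ ((η + w)/η) ^ η * Real.exp (ρ - 1) := by
    rw [mul_comm]
    exact mul_le_mul_of_nonneg_right hrpow_lb (le_of_lt (Real.exp_pos _))
  rw [hident, hexpterm, hu, hEfrac]
  linarith [hkey2, hfactor]
end

section
/- Let η > 1 be real and set α(η) = (e/(e−1)) · (η/(η+1))^{η+1} and y(η) = (e/(e−1)) · (η/(η+1))^η. Consider the reparametrized MaxExp g(y) = 1 − (1 − α(η)/(η·y))^η and the linear function l(y) = (1/e − 1)·y + 1. Then g and l touch tangentially at y(η): g(y(η)) = l(y(η)) = 1 − (η/(η+1))^η, and g'(y(η)) = l'(y(η)) = 1/e − 1. -/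
/-- Appendix F (Eq. 40): with `α(η) = (e/(e-1))(η/(η+1))^{η+1}` and
`y(η) = (e/(e-1))(η/(η+1))^η`, the reparametrized MaxExp
`g(y) = 1 - (1 - α/(η y))^η` and the line `l(y) = (1/e - 1)y + 1` touch
tangentially at `y(η)`: equal values `1 - (η/(η+1))^η` and equal first
derivatives `1/e - 1`. -/
theorem maxExp_touches_linear_bound (η : ℝ) (hη : 1 < η) :
    let e : ℝ := Real.exp 1
    let α : ℝ := (e / (e - 1)) * (η / (η + 1)) ^ (η + 1)
    let y : ℝ := (e / (e - 1)) * (η / (η + 1)) ^ η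
    let g : ℝ → ℝ := fun z => 1 - (1 - α / (η * z)) ^ η
    let l : ℝ → ℝ := fun z => (1 / e - 1) * z + 1
    g y = 1 - (η / (η + 1)) ^ η ∧ l y = 1 - (η / (η + 1)) ^ η ∧
      deriv g y = 1 / e - 1 ∧ deriv l y = 1 / e - 1 := by
  intro e α y g l
  have he : (1:ℝ) < e := by
    have := Real.add_one_le_exp (1:ℝ); simp only [e]; linarith
  have he0 : (0:ℝ) < e := by linarith
  have he1 : (0:ℝ) < e - 1 := by linarith
  have hη0 : (0:ℝ) < η := by linarith
  have hη1 : (0:ℝ) < η + 1 := by linarith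
  have hr0 : (0:ℝ) < η / (η + 1) := by positivity
  have hrpow : (0:ℝ) < (η / (η + 1)) ^ η := Real.rpow_pos_of_pos hr0 η
  have hy0 : (0:ℝ) < y := by
    have : (0:ℝ) < e / (e - 1) := by positivity
    exact mul_pos this hrpow
  have hre : (η / (η + 1)) ^ (η + 1) = (η / (η + 1)) ^ η * (η / (η + 1)) :=
    Real.rpow_add_one hr0.ne' η
  have hα : α = y * (η / (η + 1)) := by
    simp only [α, y, hre]; ring
  have key : 1 - α / (η * y) = η / (η + 1) := by
    rw [hα]
    have : y * (η / (η + 1)) / (η * y) = 1 / (η + 1) := by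
      field_simp
    rw [this]; field_simp; ring
  have hyval : (η / (η + 1)) ^ η / y = (e - 1) / e := by
    simp only [y]; field_simp
  refine ⟨?_, ?_, ?_, ?_⟩
  · simp only [g, key]
  · simp only [l, y]
    field_simp
    ring
  · -- deriv g
    have hu : HasDerivAt (fun z : ℝ => η * z) η y := by
      simpa using (hasDerivAt_id y).const_mul η
    have hηy : η * y ≠ 0 := by positivity
    have hinv : HasDerivAt (fun z : ℝ => (η * z)⁻¹) (-η / (η * y) ^ 2) y := hu.inv hηy
    have hmul : HasDerivAt (fun z : ℝ => α * (η * z)⁻¹) (α * (-η / (η * y) ^ 2)) y :=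
      hinv.const_mul α
    have hf : HasDerivAt (fun z : ℝ => 1 - α / (η * z))
        (-(α * (-η / (η * y) ^ 2))) y := by
      have := (hasDerivAt_const y (1:ℝ)).sub hmul
      have h2 : (fun z : ℝ => 1 - α / (η * z)) = fun z => 1 - α * (η * z)⁻¹ := by
        funext z; rw [div_eq_mul_inv]
      rw [h2]; exact this.congr_deriv (by ring)
    have hpow : HasDerivAt (fun z : ℝ => (1 - α / (η * z)) ^ η)
        ((-(α * (-η / (η * y) ^ 2))) * η * (1 - α / (η * y)) ^ (η - 1)) y :=
      hf.rpow_const (Or.inr hη.le)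
    have hg : HasDerivAt g
        (-((-(α * (-η / (η * y) ^ 2))) * η * (1 - α / (η * y)) ^ (η - 1))) y := by
      have := (hasDerivAt_const y (1:ℝ)).sub hpow
      exact this.congr_deriv (by ring)
    rw [hg.deriv]
    rw [key]
    have hrm1 : (η / (η + 1)) ^ (η - 1) = (η / (η + 1)) ^ η / (η / (η + 1)) :=
      Real.rpow_sub_one hr0.ne' η
    rw [hrm1, hα]
    have hηne : η ≠ 0 := hη0.ne'
    have hη1ne : η + 1 ≠ 0 := hη1.ne'
    have hyne : y ≠ 0 := hy0.ne'
    have hrne : η / (η + 1) ≠ 0 := hr0.ne'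
    have hexpr : -(-(y * (η / (η + 1)) * (-η / (η * y) ^ 2)) * η *
        ((η / (η + 1)) ^ η / (η / (η + 1)))) = -((η / (η + 1)) ^ η / y) := by
      field_simp
    rw [hexpr, hyval]
    field_simp
    ring
  · have : HasDerivAt l (1 / e - 1) y := by
      simpa [l, one_div] using ((hasDerivAt_id y).const_mul (1 / e - 1)).add_const 1
    exact this.deriv
end

section
/- Let η̄ > 1 be real, set A = ((η̄ − 1)/η̄)^{η̄} and t = (e/(e−1)) · A/(A + η̄ − 1). Then the scaled reparametrized MaxExp h(y) = (1 − ((e−1)/e)·t) · (1 − (1 − t/y)^{η̄}) touches the linear function l(y) = (1/e − 1)·y + 1 at both y₀ = t and y₁ = t·η̄: h(t) = l(t) = 1 − ((e−1)/e)·t and h(t·η̄) = l(t·η̄) = 1 − ((e−1)/e)·t·η̄. -/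
/-- Appendix P (Eqs. 61–62, time-reversed FAHDP): with
`A = ((η̄-1)/η̄)^η̄` and `t = (e/(e-1))·A/(A + η̄ - 1)`, the scaled
reparametrized MaxExp `h(y) = (1 - ((e-1)/e)t)(1 - (1 - t/y)^η̄)` touches the
line `l(y) = (1/e - 1)y + 1` at both `y₀ = t` and `y₁ = t·η̄`. -/
theorem scaled_maxExp_touches_linear_bound (ηb : ℝ) (hηb : 1 < ηb) :
    let e : ℝ := Real.exp 1
    let A : ℝ := ((ηb - 1) / ηb) ^ ηb
    let t : ℝ := (e / (e - 1)) * A / (A + ηb - 1)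
    let h : ℝ → ℝ := fun y => (1 - ((e - 1) / e) * t) * (1 - (1 - t / y) ^ ηb)
    let l : ℝ → ℝ := fun y => (1 / e - 1) * y + 1
    h t = l t ∧ l t = 1 - ((e - 1) / e) * t ∧
      h (t * ηb) = l (t * ηb) ∧ l (t * ηb) = 1 - ((e - 1) / e) * t * ηb := by
  intro e A t h l
  have he : (1:ℝ) < e := by
    have := Real.exp_one_gt_d9; simp only [e]; linarith
  have he0 : e ≠ 0 := by linarith
  have he1 : e - 1 > 0 := by linarith
  have hηb0 : ηb > 0 := by linarith
  have hbase : (ηb - 1) / ηb > 0 := div_pos (by linarith) hηb0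
  have hA : A > 0 := Real.rpow_pos_of_pos hbase ηb
  have hden : A + ηb - 1 > 0 := by linarith
  have ht : t > 0 := div_pos (mul_pos (div_pos (by linarith) he1) hA) hden
  have ht0 : t ≠ 0 := ne_of_gt ht
  -- key algebraic identity: ((e-1)/e) * t * (A + ηb - 1) = A
  have hkey : ((e - 1) / e) * t * (A + ηb - 1) = A := by
    simp only [t]
    field_simp
  have hlt : l t = 1 - ((e - 1) / e) * t := by
    simp only [l]; field_simp; ring
  have h1 : h t = l t := by
    rw [hlt]
    simp only [h]
    rw [div_self ht0]
    norm_num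
    rw [Real.zero_rpow (by linarith : ηb ≠ 0)]
    ring
  have hA' : (1 - t / (t * ηb)) ^ ηb = A := by
    have : 1 - t / (t * ηb) = (ηb - 1) / ηb := by
      field_simp
    rw [this]
  have hltη : l (t * ηb) = 1 - ((e - 1) / e) * t * ηb := by
    simp only [l]; field_simp; ring
  refine ⟨h1, hlt, ?_, hltη⟩
  rw [hltη]
  simp only [h]
  rw [hA']
  nlinarith [hkey]
end
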